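/- The Bohl spectrum of a Lyapunov sequence A : ℕ → GL_d(ℝ) is a nonempty disjoint union of at most d bounded intervals. -/

import Mathlib

open Filter Topology

noncomputable section

abbrev Euc (d : ℕ) := EuclideanSpace ℝ (Fin d)

/-- forward product `A(m+k-1) ⋯ A(m)` -/
def fwd {d : ℕ} (A : ℕ → (Euc d →L[ℝ] Euc d)) (m : ℕ) : ℕ → (Euc d →L[ℝ] Euc d)
  | 0 => 1
  | k + 1 => A (m + k) * fwd A m k

/-- backward product `Ainv(n) ⋯ Ainv(n+k-1)` -/
def bwd {d : ℕ} (Ainv : ℕ → (Euc d →L[ℝ] Euc d)) (n : ℕ) : ℕ → (Euc d →L[ℝ] Euc d)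
  | 0 => 1
  | k + 1 => bwd Ainv n k * Ainv (n + k)

/-- transition matrix Φ_A(n,m) -/
def Phi {d : ℕ} (A Ainv : ℕ → (Euc d →L[ℝ] Euc d)) (n m : ℕ) : Euc d →L[ℝ] Euc d :=
  if m ≤ n then fwd A m (n - m) else bwd Ainv n (m - n)

/-- A is a bounded sequence of invertible maps with bounded inverse sequence Ainv -/
def IsLyapunov {d : ℕ} (A Ainv : ℕ → (Euc d →L[ℝ] Euc d)) : Prop :=
  (∀ n, A n * Ainv n = 1) ∧ (∀ n, Ainv n * A n = 1) ∧
    BddAbove (Set.range fun n => ‖A n‖) ∧ BddAbove (Set.range fun n => ‖Ainv n‖)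

/-- `‖A‖_∞ = sup_n ‖A(n)‖` -/
def supNorm {d : ℕ} (A : ℕ → (Euc d →L[ℝ] Euc d)) : ℝ := ⨆ n, ‖A n‖

/-- solution `x(n,x₀) = Φ_A(n,0) x₀` -/
def sol {d : ℕ} (A : ℕ → (Euc d →L[ℝ] Euc d)) (n : ℕ) (x₀ : Euc d) : Euc d :=
  fwd A 0 n x₀

/-- `λ(n,m) = (1/(n-m)) ln (‖x(n,x₀)‖ / ‖x(m,x₀)‖)` -/
def lam {d : ℕ} (A : ℕ → (Euc d →L[ℝ] Euc d)) (n m : ℕ) (x₀ : Euc d) : ℝ :=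
  Real.log (‖sol A n x₀‖ / ‖sol A m x₀‖) / ((n : ℝ) - (m : ℝ))

/-- upper Bohl exponent of a subspace -/
def upperBohl {d : ℕ} (A : ℕ → (Euc d →L[ℝ] Euc d)) (L : Set (Euc d)) : ℝ :=
  ⨅ N : ℕ, sSup {r | ∃ n m : ℕ, ∃ x₀ : Euc d,
    N < n - m ∧ x₀ ∈ L ∧ x₀ ≠ 0 ∧ r = lam A n m x₀}

/-- lower Bohl exponent of a subspace -/
def lowerBohl {d : ℕ} (A : ℕ → (Euc d →L[ℝ] Euc d)) (L : Set (Euc d)) : ℝ :=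
  ⨆ N : ℕ, sInf {r | ∃ n m : ℕ, ∃ x₀ : Euc d,
    N < n - m ∧ x₀ ∈ L ∧ x₀ ≠ 0 ∧ r = lam A n m x₀}

/-- upper Bohl exponent of a vector -/
def upperBohlVec {d : ℕ} (A : ℕ → (Euc d →L[ℝ] Euc d)) (x₀ : Euc d) : ℝ :=
  ⨅ N : ℕ, sSup {r | ∃ n m : ℕ, N < n - m ∧ r = lam A n m x₀}

/-- lower Bohl exponent of a vector -/
def lowerBohlVec {d : ℕ} (A : ℕ → (Euc d →L[ℝ] Euc d)) (x₀ : Euc d) : ℝ :=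
  ⨆ N : ℕ, sInf {r | ∃ n m : ℕ, N < n - m ∧ r = lam A n m x₀}

/-- Bohl spectrum -/
def bohlSpectrum {d : ℕ} (A : ℕ → (Euc d →L[ℝ] Euc d)) : Set ℝ :=
  {γ | ∃ x₀ : Euc d, x₀ ≠ 0 ∧ γ ∈ Set.Icc (lowerBohlVec A x₀) (upperBohlVec A x₀)}

/-- the γ-shifted system `e^{-γ} A` -/
def shift {d : ℕ} (A : ℕ → (Euc d →L[ℝ] Euc d)) (γ : ℝ) : ℕ → (Euc d →L[ℝ] Euc d) :=
  fun n => Real.exp (-γ) • A n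

/-- Bohl dichotomy on a given pair of subspaces -/
def HasBohlDichotomyOn {d : ℕ} (A : ℕ → (Euc d →L[ℝ] Euc d))
    (L₁ L₂ : Submodule ℝ (Euc d)) : Prop :=
  ∃ α : ℝ, 0 < α ∧ ∃ C₁ C₂ : Euc d → ℝ, (∀ x, 0 < C₁ x) ∧ (∀ x, 0 < C₂ x) ∧
    (∀ x₀ ∈ L₁, ∀ m n : ℕ, m ≤ n →
      ‖sol A n x₀‖ ≤ C₁ x₀ * Real.exp (-α * ((n : ℝ) - (m : ℝ))) * ‖sol A m x₀‖) ∧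
    (∀ x₀ ∈ L₂, ∀ m n : ℕ, m ≤ n →
      C₂ x₀ * Real.exp (α * ((n : ℝ) - (m : ℝ))) * ‖sol A m x₀‖ ≤ ‖sol A n x₀‖)

/-- Bohl dichotomy -/
def HasBohlDichotomy {d : ℕ} (A : ℕ → (Euc d →L[ℝ] Euc d)) : Prop :=
  ∃ L₁ L₂ : Submodule ℝ (Euc d), IsCompl L₁ L₂ ∧ HasBohlDichotomyOn A L₁ L₂

/-- Bohl dichotomy spectrum -/
def bdSpectrum {d : ℕ} (A : ℕ → (Euc d →L[ℝ] Euc d)) : Set ℝ :=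
  {γ | ¬ HasBohlDichotomy (shift A γ)}


namespace BohlAux

open Real Set

variable {d : ℕ}

lemma sol_zero (A : ℕ → (Euc d →L[ℝ] Euc d)) (x : Euc d) : sol A 0 x = x := rfl

lemma sol_succ (A : ℕ → (Euc d →L[ℝ] Euc d)) (n : ℕ) (x : Euc d) :
    sol A (n + 1) x = A n (sol A n x) := by
  show (fwd A 0 (n + 1)) x = _
  rw [fwd, Nat.zero_add]
  rfl

lemma sol_smul (A : ℕ → (Euc d →L[ℝ] Euc d)) (n : ℕ) (c : ℝ) (x : Euc d) :
    sol A n (c • x) = c • sol A n x := map_smul (fwd A 0 n) c x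

lemma sol_add (A : ℕ → (Euc d →L[ℝ] Euc d)) (n : ℕ) (x y : Euc d) :
    sol A n (x + y) = sol A n x + sol A n y := map_add (fwd A 0 n) x y

section Lyap

variable {A Ainv : ℕ → (Euc d →L[ℝ] Euc d)} {K : ℝ}

lemma exists_K (hA : IsLyapunov A Ainv) :
    ∃ K : ℝ, 1 ≤ K ∧ (∀ n, ‖A n‖ ≤ K) ∧ (∀ n, ‖Ainv n‖ ≤ K) := by
  obtain ⟨-, -, ⟨K₁, h₁⟩, ⟨K₂, h₂⟩⟩ := hA
  refine ⟨max 1 (max K₁ K₂), le_max_left _ _, fun n => ?_, fun n => ?_⟩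
  · exact le_trans (h₁ ⟨n, rfl⟩) (le_trans (le_max_left _ _) (le_max_right _ _))
  · exact le_trans (h₂ ⟨n, rfl⟩) (le_trans (le_max_right _ _) (le_max_right _ _))

lemma hinv_of (hA : IsLyapunov A Ainv) : ∀ n y, Ainv n (A n y) = y := by
  intro n y
  have h := hA.2.1 n
  calc Ainv n (A n y) = (Ainv n * A n) y := rfl
    _ = y := by rw [h]; rfl

lemma norm_sol_le (hK1 : 1 ≤ K) (hKA : ∀ n, ‖A n‖ ≤ K) (m k : ℕ) (x : Euc d) :
    ‖sol A (m + k) x‖ ≤ K ^ k * ‖sol A m x‖ := by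
  induction k with
  | zero => simp
  | succ k ih =>
    have h1 : sol A (m + (k + 1)) x = A (m + k) (sol A (m + k) x) := sol_succ A (m + k) x
    calc ‖sol A (m + (k + 1)) x‖ = ‖A (m + k) (sol A (m + k) x)‖ := by rw [h1]
      _ ≤ ‖A (m + k)‖ * ‖sol A (m + k) x‖ := ContinuousLinearMap.le_opNorm _ _
      _ ≤ K * (K ^ k * ‖sol A m x‖) := by
          apply mul_le_mul (hKA _) ih (norm_nonneg _) (by linarith)
      _ = K ^ (k + 1) * ‖sol A m x‖ := by ring

lemma norm_sol_ge (hK1 : 1 ≤ K) (hKI : ∀ n, ‖Ainv n‖ ≤ K)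
    (hinv : ∀ n y, Ainv n (A n y) = y) (m k : ℕ) (x : Euc d) :
    ‖sol A m x‖ ≤ K ^ k * ‖sol A (m + k) x‖ := by
  induction k with
  | zero => simp
  | succ k ih =>
    have h1 : sol A (m + k) x = Ainv (m + k) (sol A (m + (k + 1)) x) := by
      have := sol_succ A (m + k) x
      rw [show m + (k+1) = (m+k) + 1 by omega, this, hinv]
    have h2 : ‖sol A (m + k) x‖ ≤ K * ‖sol A (m + (k + 1)) x‖ := by
      rw [h1]
      calc ‖Ainv (m + k) (sol A (m + (k + 1)) x)‖
          ≤ ‖Ainv (m + k)‖ * ‖sol A (m + (k + 1)) x‖ := ContinuousLinearMap.le_opNorm _ _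
        _ ≤ K * ‖sol A (m + (k + 1)) x‖ :=
            mul_le_mul_of_nonneg_right (hKI _) (norm_nonneg _)
    have hKk : (0:ℝ) < K ^ k := pow_pos (by linarith) k
    calc ‖sol A m x‖ ≤ K ^ k * ‖sol A (m + k) x‖ := ih
      _ ≤ K ^ k * (K * ‖sol A (m + (k + 1)) x‖) :=
          mul_le_mul_of_nonneg_left h2 (le_of_lt hKk)
      _ = K ^ (k + 1) * ‖sol A (m + (k + 1)) x‖ := by ring

lemma sol_norm_pos (hK1 : 1 ≤ K) (hKI : ∀ n, ‖Ainv n‖ ≤ K)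
    (hinv : ∀ n y, Ainv n (A n y) = y) {x : Euc d} (hx : x ≠ 0) (m : ℕ) :
    0 < ‖sol A m x‖ := by
  have h := norm_sol_ge hK1 hKI hinv 0 m x
  rw [Nat.zero_add, sol_zero] at h
  have hx' : 0 < ‖x‖ := norm_pos_iff.mpr hx
  have hKk : (0:ℝ) < K ^ m := pow_pos (by linarith) m
  by_contra hc
  push_neg at hc
  have h0 : ‖sol A m x‖ = 0 := le_antisymm hc (norm_nonneg _)
  rw [h0, mul_zero] at h
  linarith

lemma lam_mem (hK1 : 1 ≤ K) (hKA : ∀ n, ‖A n‖ ≤ K) (hKI : ∀ n, ‖Ainv n‖ ≤ K)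
    (hinv : ∀ n y, Ainv n (A n y) = y) {x : Euc d} (hx : x ≠ 0) {n m : ℕ} (h : m < n) :
    lam A n m x ∈ Set.Icc (-Real.log K) (Real.log K) := by
  have hK0 : (0:ℝ) < K := by linarith
  obtain ⟨p, rfl⟩ : ∃ p, n = m + p := ⟨n - m, by omega⟩
  have hp : 0 < p := by omega
  have hu : 0 < ‖sol A m x‖ := sol_norm_pos hK1 hKI hinv hx m
  have hv : 0 < ‖sol A (m + p) x‖ := sol_norm_pos hK1 hKI hinv hx (m + p)
  have h1 : ‖sol A (m + p) x‖ ≤ K ^ p * ‖sol A m x‖ := norm_sol_le hK1 hKA m p x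
  have h2 : ‖sol A m x‖ ≤ K ^ p * ‖sol A (m + p) x‖ := norm_sol_ge hK1 hKI hinv m p x
  have hlog1 : Real.log (‖sol A (m + p) x‖ / ‖sol A m x‖) ≤ p * Real.log K := by
    calc Real.log (‖sol A (m + p) x‖ / ‖sol A m x‖)
        ≤ Real.log (K ^ p) := Real.log_le_log (by positivity) (by
          rw [div_le_iff₀ hu]; exact h1)
      _ = p * Real.log K := Real.log_pow K p
  have hlog2 : -(p * Real.log K) ≤ Real.log (‖sol A (m + p) x‖ / ‖sol A m x‖) := by
    have hthis : Real.log (‖sol A m x‖ / ‖sol A (m + p) x‖) ≤ p * Real.log K := by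
      calc Real.log (‖sol A m x‖ / ‖sol A (m + p) x‖)
          ≤ Real.log (K ^ p) := Real.log_le_log (by positivity) (by
            rw [div_le_iff₀ hv]; exact h2)
        _ = p * Real.log K := Real.log_pow K p
    have hrev : Real.log (‖sol A m x‖ / ‖sol A (m + p) x‖)
        = -Real.log (‖sol A (m + p) x‖ / ‖sol A m x‖) := by
      rw [← Real.log_inv]
      congr 1
      field_simp
    rw [hrev] at hthis
    linarith
  have hcast : ((m + p : ℕ) : ℝ) - (m : ℝ) = (p : ℝ) := by push_cast; ring
  have hpp : (0:ℝ) < (p : ℝ) := by exact_mod_cast hp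
  unfold lam
  rw [hcast]
  constructor
  · rw [le_div_iff₀ hpp]
    calc -Real.log K * p = -(p * Real.log K) := by ring
      _ ≤ _ := hlog2
  · rw [div_le_iff₀ hpp]
    calc Real.log (‖sol A (m + p) x‖ / ‖sol A m x‖) ≤ p * Real.log K := hlog1
      _ = Real.log K * p := by ring

end Lyap

section BohlVec

variable {A Ainv : ℕ → (Euc d →L[ℝ] Euc d)} {K : ℝ}

/-- the set over which sSup/sInf are taken in the Bohl exponents -/
def Tset (A : ℕ → (Euc d →L[ℝ] Euc d)) (x : Euc d) (N : ℕ) : Set ℝ :=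
  {r | ∃ n m : ℕ, N < n - m ∧ r = lam A n m x}

lemma upperBohlVec_def (A : ℕ → (Euc d →L[ℝ] Euc d)) (x : Euc d) :
    upperBohlVec A x = ⨅ N : ℕ, sSup (Tset A x N) := rfl

lemma lowerBohlVec_def (A : ℕ → (Euc d →L[ℝ] Euc d)) (x : Euc d) :
    lowerBohlVec A x = ⨆ N : ℕ, sInf (Tset A x N) := rfl

lemma Tset_nonempty (A : ℕ → (Euc d →L[ℝ] Euc d)) (x : Euc d) (N : ℕ) :
    (Tset A x N).Nonempty :=
  ⟨lam A (N + 1) 0 x, N + 1, 0, by omega, rfl⟩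

lemma mem_Tset_lam (A : ℕ → (Euc d →L[ℝ] Euc d)) (x : Euc d) {N n : ℕ} (h : N < n) :
    lam A n 0 x ∈ Tset A x N := ⟨n, 0, by omega, rfl⟩

lemma Tset_anti (A : ℕ → (Euc d →L[ℝ] Euc d)) (x : Euc d) {N N' : ℕ} (h : N ≤ N') :
    Tset A x N' ⊆ Tset A x N := by
  rintro r ⟨n, m, hnm, rfl⟩
  exact ⟨n, m, by omega, rfl⟩

lemma Tset_subset_Icc (hK1 : 1 ≤ K) (hKA : ∀ n, ‖A n‖ ≤ K) (hKI : ∀ n, ‖Ainv n‖ ≤ K)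
    (hinv : ∀ n y, Ainv n (A n y) = y) {x : Euc d} (hx : x ≠ 0) (N : ℕ) :
    Tset A x N ⊆ Set.Icc (-Real.log K) (Real.log K) := by
  rintro r ⟨n, m, hnm, rfl⟩
  have hmn : m < n := by omega
  exact lam_mem hK1 hKA hKI hinv hx hmn

lemma Tset_bddAbove (hK1 : 1 ≤ K) (hKA : ∀ n, ‖A n‖ ≤ K) (hKI : ∀ n, ‖Ainv n‖ ≤ K)
    (hinv : ∀ n y, Ainv n (A n y) = y) {x : Euc d} (hx : x ≠ 0) (N : ℕ) : BddAbove (Tset A x N) :=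
  ⟨Real.log K, fun r hr => (Tset_subset_Icc hK1 hKA hKI hinv hx N hr).2⟩

lemma Tset_bddBelow (hK1 : 1 ≤ K) (hKA : ∀ n, ‖A n‖ ≤ K) (hKI : ∀ n, ‖Ainv n‖ ≤ K)
    (hinv : ∀ n y, Ainv n (A n y) = y) {x : Euc d} (hx : x ≠ 0) (N : ℕ) : BddBelow (Tset A x N) :=
  ⟨-Real.log K, fun r hr => (Tset_subset_Icc hK1 hKA hKI hinv hx N hr).1⟩

lemma sSup_Tset_mem (hK1 : 1 ≤ K) (hKA : ∀ n, ‖A n‖ ≤ K) (hKI : ∀ n, ‖Ainv n‖ ≤ K)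
    (hinv : ∀ n y, Ainv n (A n y) = y) {x : Euc d} (hx : x ≠ 0) (N : ℕ) :
    sSup (Tset A x N) ∈ Set.Icc (-Real.log K) (Real.log K) := by
  obtain ⟨r, hr⟩ := Tset_nonempty A x N
  constructor
  · exact le_trans (Tset_subset_Icc hK1 hKA hKI hinv hx N hr).1
      (le_csSup (Tset_bddAbove hK1 hKA hKI hinv hx N) hr)
  · exact csSup_le ⟨r, hr⟩ fun s hs => (Tset_subset_Icc hK1 hKA hKI hinv hx N hs).2

lemma sInf_Tset_mem (hK1 : 1 ≤ K) (hKA : ∀ n, ‖A n‖ ≤ K) (hKI : ∀ n, ‖Ainv n‖ ≤ K)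
    (hinv : ∀ n y, Ainv n (A n y) = y) {x : Euc d} (hx : x ≠ 0) (N : ℕ) :
    sInf (Tset A x N) ∈ Set.Icc (-Real.log K) (Real.log K) := by
  obtain ⟨r, hr⟩ := Tset_nonempty A x N
  constructor
  · exact le_csInf ⟨r, hr⟩ fun s hs => (Tset_subset_Icc hK1 hKA hKI hinv hx N hs).1
  · exact le_trans (csInf_le (Tset_bddBelow hK1 hKA hKI hinv hx N) hr)
      (Tset_subset_Icc hK1 hKA hKI hinv hx N hr).2

lemma bddBelow_sSup_Tset (hK1 : 1 ≤ K) (hKA : ∀ n, ‖A n‖ ≤ K) (hKI : ∀ n, ‖Ainv n‖ ≤ K)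
    (hinv : ∀ n y, Ainv n (A n y) = y) {x : Euc d} (hx : x ≠ 0) :
    BddBelow (Set.range fun N => sSup (Tset A x N)) := by
  refine ⟨-Real.log K, ?_⟩
  rintro _ ⟨N, rfl⟩
  exact (sSup_Tset_mem hK1 hKA hKI hinv hx N).1

lemma bddAbove_sInf_Tset (hK1 : 1 ≤ K) (hKA : ∀ n, ‖A n‖ ≤ K) (hKI : ∀ n, ‖Ainv n‖ ≤ K)
    (hinv : ∀ n y, Ainv n (A n y) = y) {x : Euc d} (hx : x ≠ 0) :
    BddAbove (Set.range fun N => sInf (Tset A x N)) := by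
  refine ⟨Real.log K, ?_⟩
  rintro _ ⟨N, rfl⟩
  exact (sInf_Tset_mem hK1 hKA hKI hinv hx N).2

lemma upperBohlVec_mem (hK1 : 1 ≤ K) (hKA : ∀ n, ‖A n‖ ≤ K) (hKI : ∀ n, ‖Ainv n‖ ≤ K)
    (hinv : ∀ n y, Ainv n (A n y) = y) {x : Euc d} (hx : x ≠ 0) :
    upperBohlVec A x ∈ Set.Icc (-Real.log K) (Real.log K) := by
  rw [upperBohlVec_def]
  constructor
  · exact le_ciInf fun N => (sSup_Tset_mem hK1 hKA hKI hinv hx N).1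
  · exact ciInf_le_of_le (bddBelow_sSup_Tset hK1 hKA hKI hinv hx) 0
      (sSup_Tset_mem hK1 hKA hKI hinv hx 0).2

lemma lowerBohlVec_mem (hK1 : 1 ≤ K) (hKA : ∀ n, ‖A n‖ ≤ K) (hKI : ∀ n, ‖Ainv n‖ ≤ K)
    (hinv : ∀ n y, Ainv n (A n y) = y) {x : Euc d} (hx : x ≠ 0) :
    lowerBohlVec A x ∈ Set.Icc (-Real.log K) (Real.log K) := by
  rw [lowerBohlVec_def]
  constructor
  · exact le_ciSup_of_le (bddAbove_sInf_Tset hK1 hKA hKI hinv hx) 0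
      (sInf_Tset_mem hK1 hKA hKI hinv hx 0).1
  · exact ciSup_le fun N => (sInf_Tset_mem hK1 hKA hKI hinv hx N).2

lemma lowerBohlVec_le_upperBohlVec (hK1 : 1 ≤ K) (hKA : ∀ n, ‖A n‖ ≤ K) (hKI : ∀ n, ‖Ainv n‖ ≤ K)
    (hinv : ∀ n y, Ainv n (A n y) = y) {x : Euc d} (hx : x ≠ 0) :
    lowerBohlVec A x ≤ upperBohlVec A x := by
  rw [lowerBohlVec_def, upperBohlVec_def]
  refine le_ciInf fun M => ciSup_le fun N => ?_
  calc sInf (Tset A x N) ≤ sInf (Tset A x (max N M)) :=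
        csInf_le_csInf (Tset_bddBelow hK1 hKA hKI hinv hx N)
          (Tset_nonempty A x (max N M)) (Tset_anti A x (le_max_left N M))
    _ ≤ sSup (Tset A x (max N M)) :=
        csInf_le_csSup (Tset_nonempty A x (max N M)) (Tset_bddBelow hK1 hKA hKI hinv hx (max N M))
          (Tset_bddAbove hK1 hKA hKI hinv hx (max N M))
    _ ≤ sSup (Tset A x M) :=
        csSup_le_csSup (Tset_bddAbove hK1 hKA hKI hinv hx M)
          (Tset_nonempty A x (max N M)) (Tset_anti A x (le_max_right N M))

lemma lam_smul (A : ℕ → (Euc d →L[ℝ] Euc d)) (n m : ℕ) {c : ℝ} (hc : c ≠ 0) (x : Euc d) :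
    lam A n m (c • x) = lam A n m x := by
  unfold lam
  rw [sol_smul, sol_smul, norm_smul, norm_smul,
    mul_div_mul_left _ _ (norm_ne_zero_iff.mpr hc)]

lemma Tset_smul (A : ℕ → (Euc d →L[ℝ] Euc d)) {c : ℝ} (hc : c ≠ 0) (x : Euc d) (N : ℕ) :
    Tset A (c • x) N = Tset A x N := by
  ext r
  constructor
  · rintro ⟨n, m, hnm, rfl⟩; exact ⟨n, m, hnm, (lam_smul A n m hc x)⟩
  · rintro ⟨n, m, hnm, rfl⟩; exact ⟨n, m, hnm, (lam_smul A n m hc x).symm⟩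

lemma upperBohlVec_smul (A : ℕ → (Euc d →L[ℝ] Euc d)) {c : ℝ} (hc : c ≠ 0) (x : Euc d) :
    upperBohlVec A (c • x) = upperBohlVec A x := by
  rw [upperBohlVec_def, upperBohlVec_def]
  congr 1
  funext N
  rw [Tset_smul A hc]

lemma lowerBohlVec_smul (A : ℕ → (Euc d →L[ℝ] Euc d)) {c : ℝ} (hc : c ≠ 0) (x : Euc d) :
    lowerBohlVec A (c • x) = lowerBohlVec A x := by
  rw [lowerBohlVec_def, lowerBohlVec_def]
  congr 1
  funext N
  rw [Tset_smul A hc]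

lemma sol_growth_of_sSup_lt (hK1 : 1 ≤ K) (hKA : ∀ n, ‖A n‖ ≤ K) (hKI : ∀ n, ‖Ainv n‖ ≤ K)
    (hinv : ∀ n y, Ainv n (A n y) = y) {z : Euc d} (hz : z ≠ 0) {Nz : ℕ} {c : ℝ}
    (hNz : sSup (Tset A z Nz) < c) {n : ℕ} (hn : Nz < n) :
    ‖sol A n z‖ ≤ ‖z‖ * Real.exp (n * c) := by
  have hn0 : (0:ℝ) < (n : ℝ) := by exact_mod_cast (show 0 < n by omega)
  have hlam : lam A n 0 z ≤ c :=
    le_trans (le_csSup (Tset_bddAbove hK1 hKA hKI hinv hz Nz) (mem_Tset_lam A z hn)) hNz.le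
  have hz0 : 0 < ‖z‖ := norm_pos_iff.mpr hz
  have hs0 : 0 < ‖sol A n z‖ := sol_norm_pos hK1 hKI hinv hz n
  have hlam' : Real.log (‖sol A n z‖ / ‖z‖) ≤ (n : ℝ) * c := by
    have h0 : lam A n 0 z = Real.log (‖sol A n z‖ / ‖z‖) / (n : ℝ) := by
      unfold lam
      rw [sol_zero]
      norm_num
    rw [h0, div_le_iff₀ hn0] at hlam
    calc Real.log (‖sol A n z‖ / ‖z‖) ≤ c * n := hlam
      _ = (n : ℝ) * c := by ring
  have hratio : ‖sol A n z‖ / ‖z‖ ≤ Real.exp ((n : ℝ) * c) := by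
    rw [← Real.exp_log (show (0:ℝ) < ‖sol A n z‖ / ‖z‖ by positivity)]
    exact Real.exp_le_exp.mpr hlam'
  rw [div_le_iff₀ hz0] at hratio
  calc ‖sol A n z‖ ≤ Real.exp ((n:ℝ) * c) * ‖z‖ := hratio
    _ = ‖z‖ * Real.exp ((n:ℝ) * c) := by ring

lemma lower_add_le (hK1 : 1 ≤ K) (hKA : ∀ n, ‖A n‖ ≤ K) (hKI : ∀ n, ‖Ainv n‖ ≤ K)
    (hinv : ∀ n y, Ainv n (A n y) = y) {x y : Euc d} (hx : x ≠ 0) (hy : y ≠ 0)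
    (hxy : x + y ≠ 0) :
    lowerBohlVec A (x + y) ≤ max (upperBohlVec A x) (upperBohlVec A y) := by
  set μ := max (upperBohlVec A x) (upperBohlVec A y) with hμ
  have key : ∀ ε : ℝ, 0 < ε → lowerBohlVec A (x + y) ≤ μ + ε := by
    intro ε hε
    have hux : (⨅ N : ℕ, sSup (Tset A x N)) < μ + ε / 2 := by
      rw [← upperBohlVec_def]
      have h := le_max_left (upperBohlVec A x) (upperBohlVec A y)
      rw [← hμ] at h
      linarith
    have huy : (⨅ N : ℕ, sSup (Tset A y N)) < μ + ε / 2 := by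
      rw [← upperBohlVec_def]
      have h := le_max_right (upperBohlVec A x) (upperBohlVec A y)
      rw [← hμ] at h
      linarith
    obtain ⟨N₁, hN₁⟩ := exists_lt_of_ciInf_lt hux
    obtain ⟨N₂, hN₂⟩ := exists_lt_of_ciInf_lt huy
    have hx0 : 0 < ‖x‖ := norm_pos_iff.mpr hx
    have hy0 : 0 < ‖y‖ := norm_pos_iff.mpr hy
    have hxy0 : 0 < ‖x + y‖ := norm_pos_iff.mpr hxy
    set C : ℝ := (‖x‖ + ‖y‖) / ‖x + y‖ with hC
    have hC0 : 0 < C := by positivity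
    obtain ⟨n₀, hn₀⟩ := exists_nat_gt (2 * |Real.log C| / ε)
    rw [lowerBohlVec_def]
    refine ciSup_le fun N => ?_
    set n : ℕ := max N (max N₁ (max N₂ n₀)) + 1 with hn
    have hNn : N < n := by omega
    have hN₁n : N₁ < n := by omega
    have hN₂n : N₂ < n := by omega
    have hn₀n : n₀ ≤ n := by omega
    have hnn : (0:ℝ) < (n : ℝ) := by positivity
    refine le_trans (csInf_le (Tset_bddBelow hK1 hKA hKI hinv hxy N) (mem_Tset_lam A (x+y) hNn)) ?_
    -- bound lam A n 0 (x+y)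
    have hbx : ‖sol A n x‖ ≤ ‖x‖ * Real.exp (n * (μ + ε / 2)) :=
      sol_growth_of_sSup_lt hK1 hKA hKI hinv hx hN₁ hN₁n
    have hby : ‖sol A n y‖ ≤ ‖y‖ * Real.exp (n * (μ + ε / 2)) :=
      sol_growth_of_sSup_lt hK1 hKA hKI hinv hy hN₂ hN₂n
    have hs0 : 0 < ‖sol A n (x + y)‖ := sol_norm_pos hK1 hKI hinv hxy n
    have hsum : ‖sol A n (x + y)‖ ≤ (‖x‖ + ‖y‖) * Real.exp (n * (μ + ε / 2)) := by
      rw [sol_add]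
      calc ‖sol A n x + sol A n y‖ ≤ ‖sol A n x‖ + ‖sol A n y‖ := norm_add_le _ _
        _ ≤ ‖x‖ * Real.exp (n * (μ + ε / 2)) + ‖y‖ * Real.exp (n * (μ + ε / 2)) :=
            add_le_add hbx hby
        _ = (‖x‖ + ‖y‖) * Real.exp (n * (μ + ε / 2)) := by ring
    have hlog : Real.log (‖sol A n (x + y)‖ / ‖x + y‖) ≤ Real.log C + n * (μ + ε / 2) := by
      have hratio : ‖sol A n (x + y)‖ / ‖x + y‖ ≤ C * Real.exp (n * (μ + ε / 2)) := by
        have hCe : C * Real.exp (n * (μ + ε / 2))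
            = ((‖x‖ + ‖y‖) * Real.exp (n * (μ + ε / 2))) / ‖x + y‖ := by
          rw [hC]; ring
        rw [hCe]
        gcongr
      calc Real.log (‖sol A n (x + y)‖ / ‖x + y‖)
          ≤ Real.log (C * Real.exp (n * (μ + ε / 2))) :=
            Real.log_le_log (by positivity) hratio
        _ = Real.log C + n * (μ + ε / 2) := by
            rw [Real.log_mul (ne_of_gt hC0) (ne_of_gt (Real.exp_pos _)), Real.log_exp]
    have hlogC : Real.log C ≤ (n : ℝ) * (ε / 2) := by
      have h1 : Real.log C ≤ |Real.log C| := le_abs_self _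
      have h2 : 2 * |Real.log C| / ε < (n₀ : ℝ) := hn₀
      have h3 : (n₀ : ℝ) ≤ (n : ℝ) := by exact_mod_cast hn₀n
      have h4 : 2 * |Real.log C| < ε * (n : ℝ) := by
        rw [div_lt_iff₀ hε] at h2
        nlinarith
      linarith
    have hlamval : lam A n 0 (x + y) = Real.log (‖sol A n (x + y)‖ / ‖x + y‖) / (n : ℝ) := by
      unfold lam
      rw [sol_zero]
      norm_num
    rw [hlamval, div_le_iff₀ hnn]
    calc Real.log (‖sol A n (x + y)‖ / ‖x + y‖) ≤ Real.log C + n * (μ + ε / 2) := hlog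
      _ ≤ (n : ℝ) * (ε / 2) + n * (μ + ε / 2) := by linarith
      _ = (μ + ε) * n := by ring
  apply le_of_forall_sub_le
  intro ε hε
  linarith [key ε hε]

end BohlVec

section Spectrum

variable {A Ainv : ℕ → (Euc d →L[ℝ] Euc d)} {K : ℝ}

lemma bohlSpectrum_subset_Icc (hK1 : 1 ≤ K) (hKA : ∀ n, ‖A n‖ ≤ K) (hKI : ∀ n, ‖Ainv n‖ ≤ K)
    (hinv : ∀ n y, Ainv n (A n y) = y) :
    bohlSpectrum A ⊆ Set.Icc (-Real.log K) (Real.log K) := by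
  rintro γ ⟨x, hx, h1, h2⟩
  exact ⟨le_trans (lowerBohlVec_mem hK1 hKA hKI hinv hx).1 h1,
    le_trans h2 (upperBohlVec_mem hK1 hKA hKI hinv hx).2⟩

lemma bohlSpectrum_nonempty (hd : 0 < d) (hK1 : 1 ≤ K) (hKA : ∀ n, ‖A n‖ ≤ K)
    (hKI : ∀ n, ‖Ainv n‖ ≤ K) (hinv : ∀ n y, Ainv n (A n y) = y) :
    (bohlSpectrum A).Nonempty := by
  set x : Euc d := EuclideanSpace.single ⟨0, hd⟩ (1:ℝ) with hxdef
  have h1 : x ⟨0, hd⟩ = 1 := by simp [hxdef]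
  have hx : x ≠ 0 := by
    intro h
    rw [h] at h1
    simp at h1
  exact ⟨lowerBohlVec A x, x, hx, le_refl _, lowerBohlVec_le_upperBohlVec hK1 hKA hKI hinv hx⟩

lemma upper_lt_of_notMem (hγ : γ ∉ bohlSpectrum A) {x : Euc d} (hx : x ≠ 0)
    (hle : lowerBohlVec A x ≤ γ) : upperBohlVec A x < γ := by
  by_contra h
  push_neg at h
  exact hγ ⟨x, hx, hle, h⟩

lemma exists_resolvent_submodule (hK1 : 1 ≤ K) (hKA : ∀ n, ‖A n‖ ≤ K)
    (hKI : ∀ n, ‖Ainv n‖ ≤ K) (hinv : ∀ n y, Ainv n (A n y) = y) {γ : ℝ}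
    (hγ : γ ∉ bohlSpectrum A) :
    ∃ V : Submodule ℝ (Euc d), ∀ x : Euc d, x ∈ V ↔ (x = 0 ∨ upperBohlVec A x < γ) := by
  refine ⟨{ carrier := {x : Euc d | x = 0 ∨ upperBohlVec A x < γ}
            zero_mem' := Or.inl rfl
            add_mem' := ?_
            smul_mem' := ?_ }, fun x => Iff.rfl⟩
  · rintro a b ha hb
    by_cases ha0 : a = 0
    · subst ha0; simpa using hb
    by_cases hb0 : b = 0
    · subst hb0; simpa using ha
    by_cases hab : a + b = 0
    · exact Or.inl hab
    right
    have ha' : upperBohlVec A a < γ := ha.resolve_left ha0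
    have hb' : upperBohlVec A b < γ := hb.resolve_left hb0
    by_contra hlt
    push_neg at hlt
    refine hγ ⟨a + b, hab, ?_, hlt⟩
    calc lowerBohlVec A (a + b) ≤ max (upperBohlVec A a) (upperBohlVec A b) :=
          lower_add_le hK1 hKA hKI hinv ha0 hb0 hab
      _ ≤ γ := le_of_lt (max_lt ha' hb')
  · rintro c x hx
    by_cases hc : c = 0
    · subst hc; simp
    by_cases hx0 : x = 0
    · subst hx0; simp
    right
    show upperBohlVec A (c • x) < γ
    rw [upperBohlVec_smul A hc]
    exact hx.resolve_left hx0

/-- consecutive points are strictly increasing with a spectral gap in between -/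
def Rgap (S : Set ℝ) (a b : ℝ) : Prop := a < b ∧ ¬ Set.Icc a b ⊆ S

def BadChain (S : Set ℝ) (l : List ℝ) : Prop :=
  l.Chain' (Rgap S) ∧ ∀ x ∈ l, x ∈ S

lemma no_long_badChain (hd : 0 < d) (hK1 : 1 ≤ K) (hKA : ∀ n, ‖A n‖ ≤ K)
    (hKI : ∀ n, ‖Ainv n‖ ≤ K) (hinv : ∀ n y, Ainv n (A n y) = y) {l : List ℝ}
    (hl : BadChain (bohlSpectrum A) l) : l.length ≤ d := by
  by_contra hlong
  push_neg at hlong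
  set S := bohlSpectrum A with hS
  set l' : List ℝ := l.take (d + 1) with hl'def
  have hlen' : l'.length = d + 1 := by
    rw [hl'def, List.length_take]
    omega
  have hl' : BadChain S l' := ⟨hl.1.take _, fun x hx => hl.2 x ((List.take_sublist _ _).subset hx)⟩
  set s : Fin (d + 1) → ℝ := fun i => l'.get (Fin.cast hlen'.symm i) with hsdef
  have hmemS : ∀ i, s i ∈ S := fun i => hl'.2 _ (List.get_mem _ _)
  have hchain : ∀ (i : ℕ) (h : i + 1 < d + 1),
      Rgap S (s ⟨i, by omega⟩) (s ⟨i + 1, h⟩) := by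
    intro i h
    have := List.isChain_iff_getElem.mp hl'.1 i (by omega)
    exact this
  -- choose gaps
  have hgap : ∀ i : ℕ, ∀ h : i + 1 < d + 1, ∃ γ : ℝ, γ ∉ S ∧
      s ⟨i, by omega⟩ < γ ∧ γ < s ⟨i + 1, h⟩ := by
    intro i h
    obtain ⟨hlt, hnsub⟩ := hchain i h
    rw [Set.not_subset] at hnsub
    obtain ⟨γ, hγI, hγS⟩ := hnsub
    have h1 : γ ≠ s ⟨i, by omega⟩ := fun hh => hγS (hh ▸ hmemS _)
    have h2 : γ ≠ s ⟨i + 1, h⟩ := fun hh => hγS (hh ▸ hmemS _)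
    exact ⟨γ, hγS, lt_of_le_of_ne hγI.1 (Ne.symm h1), lt_of_le_of_ne hγI.2 h2⟩
  choose γ hγS hγl hγr using hgap
  -- resolvent submodules
  have hVex : ∀ (i : ℕ) (h : i + 1 < d + 1), ∃ V : Submodule ℝ (Euc d),
      ∀ x : Euc d, x ∈ V ↔ (x = 0 ∨ upperBohlVec A x < γ i h) :=
    fun i h => exists_resolvent_submodule hK1 hKA hKI hinv (hγS i h)
  choose V hV using hVex
  -- witnesses for spectrum points
  have hwit : ∀ i : Fin (d + 1), ∃ x : Euc d, x ≠ 0 ∧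
      lowerBohlVec A x ≤ s i ∧ s i ≤ upperBohlVec A x := by
    intro i
    obtain ⟨x, hx, h1, h2⟩ := hmemS i
    exact ⟨x, hx, h1, h2⟩
  -- strict chain of submodules
  have hstep : ∀ (k : ℕ) (hk : k + 1 + 1 < d + 1),
      V k (by omega) < V (k + 1) hk := by
    intro k hk
    obtain ⟨x, hx0, hlo, hup⟩ := hwit ⟨k + 1, by omega⟩
    have hxl : γ k (by omega) < upperBohlVec A x :=
      lt_of_lt_of_le (hγr k (by omega)) hup
    have hxr : upperBohlVec A x < γ (k + 1) hk := by
      apply upper_lt_of_notMem (hγS (k + 1) hk) hx0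
      exact le_trans hlo (le_of_lt (hγl (k + 1) hk))
    have hle : V k (by omega) ≤ V (k + 1) hk := by
      intro z hz
      rw [hV k (by omega)] at hz
      rw [hV (k + 1) hk]
      rcases hz with rfl | hz
      · exact Or.inl rfl
      · right
        have : γ k (by omega) < γ (k + 1) hk :=
          lt_trans (hγr k (by omega)) (hγl (k + 1) hk)
        linarith
    have hxmem : x ∈ V (k + 1) hk := (hV (k + 1) hk x).mpr (Or.inr hxr)
    have hxnot : x ∉ V k (by omega : k + 1 < d + 1) := by
      intro hmem
      rw [hV k (by omega)] at hmem
      rcases hmem with rfl | hc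
      · exact hx0 rfl
      · linarith
    exact lt_of_le_of_ne hle (fun he => hxnot (he.symm ▸ hxmem))
  -- base: V 0 is nontrivial
  have hbase : ∀ h : 0 + 1 < d + 1, 0 < Module.finrank ℝ (V 0 h) := by
    intro h
    obtain ⟨x, hx0, hlo, hup⟩ := hwit ⟨0, by omega⟩
    have hxmem : x ∈ V 0 h := by
      rw [hV 0 h]
      right
      apply upper_lt_of_notMem (hγS 0 h) hx0
      exact le_trans hlo (le_of_lt (hγl 0 h))
    rw [Module.finrank_pos_iff]
    exact ⟨⟨⟨x, hxmem⟩, 0, by simp [hx0]⟩⟩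
  have hmain : ∀ (k : ℕ) (hk : k + 1 < d + 1), k + 1 ≤ Module.finrank ℝ (V k hk) := by
    intro k
    induction k with
    | zero => exact fun hk => hbase hk
    | succ k ih =>
      intro hk
      have h1 := ih (by omega)
      have h2 := Submodule.finrank_lt_finrank_of_lt (hstep k hk)
      omega
  -- top: V (d-1) is proper
  have hlast : d - 1 + 1 < d + 1 := by omega
  have hproper : V (d - 1) hlast < ⊤ := by
    rw [lt_top_iff_ne_top]
    intro htop
    obtain ⟨x, hx0, hlo, hup⟩ := hwit ⟨d, by omega⟩
    have hxmem : x ∈ V (d - 1) hlast := htop ▸ Submodule.mem_top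
    rw [hV (d - 1) hlast] at hxmem
    rcases hxmem with rfl | hc
    · exact hx0 rfl
    · have h1 : γ (d - 1) hlast < s ⟨d - 1 + 1, hlast⟩ := hγr (d - 1) hlast
      have h2 : (⟨d - 1 + 1, hlast⟩ : Fin (d + 1)) = ⟨d, by omega⟩ := by
        congr 1
        omega
      rw [h2] at h1
      linarith
  have hfr := Submodule.finrank_lt (K := ℝ) (V := Euc d) hproper.ne
  rw [finrank_euclideanSpace_fin] at hfr
  have := hmain (d - 1) hlast
  omega

end Spectrum

section Decomp

/-- insert a point into a sorted list -/
def ins (x : ℝ) : List ℝ → List ℝ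
  | [] => [x]
  | a :: t => if x < a then x :: a :: t else a :: ins x t

lemma ins_length (x : ℝ) (l : List ℝ) : (ins x l).length = l.length + 1 := by
  induction l with
  | nil => rfl
  | cons a t ih =>
    rw [ins]
    split
    · rfl
    · simp only [List.length_cons, ih]

lemma ins_mem {x y : ℝ} : ∀ {l : List ℝ}, y ∈ ins x l → y = x ∨ y ∈ l := by
  intro l
  induction l with
  | nil => intro h; rw [ins] at h; simp at h; exact Or.inl h
  | cons a t ih =>
    intro h
    rw [ins] at h
    split at h
    · simp only [List.mem_cons] at h ⊢
      tauto
    · simp only [List.mem_cons] at h ⊢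
      rcases h with h | h
      · tauto
      · rcases ih h with h' | h' <;> tauto

lemma ins_chain {S : Set ℝ} {x : ℝ} (hxS : x ∈ S) :
    ∀ l : List ℝ, l.Chain' (Rgap S) → (∀ y ∈ l, y ∈ S) →
      (∀ y ∈ l, ¬ Set.uIcc x y ⊆ S) → (ins x l).Chain' (Rgap S) := by
  intro l
  induction l with
  | nil => intro _ _ _; exact List.isChain_singleton x
  | cons a t ih =>
    intro hc hmem hne
    have hxa : x ≠ a := by
      intro h
      refine hne a (List.mem_cons_self) ?_
      rw [h, Set.uIcc_self]
      exact Set.singleton_subset_iff.mpr (hmem a (List.mem_cons_self))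
    rw [ins]
    split_ifs with hlt
    · show List.IsChain (Rgap S) _; rw [List.isChain_cons_cons]
      refine ⟨⟨hlt, fun hsub => hne a (List.mem_cons_self) ?_⟩, hc⟩
      rwa [Set.uIcc_of_le hlt.le]
    · have hax : a < x := lt_of_le_of_ne (not_lt.mp hlt) (Ne.symm hxa)
      show List.IsChain (Rgap S) _; rw [List.isChain_cons]
      constructor
      · intro y hy
        match t with
        | [] =>
          obtain rfl : x = y := by simpa [ins] using hy
          refine ⟨hax, fun hsub => hne a (List.mem_cons_self) ?_⟩
          rwa [Set.uIcc_comm, Set.uIcc_of_le hax.le]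
        | b :: t' =>
          rw [ins] at hy
          split_ifs at hy with hxb
          · obtain rfl : x = y := by simpa using hy
            refine ⟨hax, fun hsub => hne a (List.mem_cons_self) ?_⟩
            rwa [Set.uIcc_comm, Set.uIcc_of_le hax.le]
          · obtain rfl : b = y := by simpa using hy
            exact (List.isChain_cons_cons.mp hc).1
      · exact ih hc.tail (fun y hy => hmem y (List.mem_cons_of_mem _ hy))
          (fun y hy => hne y (List.mem_cons_of_mem _ hy))

lemma ins_badChain {S : Set ℝ} {x : ℝ} (hxS : x ∈ S) {l : List ℝ} (hl : BadChain S l)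
    (hne : ∀ y ∈ l, ¬ Set.uIcc x y ⊆ S) : BadChain S (ins x l) := by
  refine ⟨ins_chain hxS l hl.1 hl.2 hne, fun y hy => ?_⟩
  rcases ins_mem hy with rfl | h
  · exact hxS
  · exact hl.2 y h

/-- abstract decomposition lemma -/
lemma decomp {S : Set ℝ} {d : ℕ} (hd : 0 < d) (hne : S.Nonempty)
    (hbdd : Bornology.IsBounded S)
    (hbound : ∀ l : List ℝ, BadChain S l → l.length ≤ d) :
    ∃ ℓ : ℕ, 1 ≤ ℓ ∧ ℓ ≤ d ∧ ∃ I : Fin ℓ → Set ℝ,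
      S = ⋃ i, I i ∧
      (∀ i, (I i).Nonempty ∧ Bornology.IsBounded (I i) ∧ (I i).OrdConnected) ∧
      (∀ i j : Fin ℓ, i < j → ∀ x ∈ I i, ∀ y ∈ I j, x < y) ∧
      (∀ i j : Fin ℓ, i < j → ∃ γ, γ ∉ S ∧
        (∀ x ∈ I i, x ≤ γ) ∧ (∀ y ∈ I j, γ ≤ y)) := by
  obtain ⟨a, ha⟩ := hne
  set Lset : Set ℕ := {n | ∃ l : List ℝ, BadChain S l ∧ l.length = n} with hLdef
  have h1L : 1 ∈ Lset := ⟨[a], ⟨List.isChain_singleton a, by simpa using ha⟩, rfl⟩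
  have hLbdd : BddAbove Lset := ⟨d, by rintro n ⟨l, hl, rfl⟩; exact hbound l hl⟩
  set ℓ : ℕ := sSup Lset with hℓdef
  have hℓmem : ℓ ∈ Lset := Nat.sSup_mem ⟨1, h1L⟩ hLbdd
  obtain ⟨l, hlBC, hlen⟩ := hℓmem
  have hmax : ∀ l' : List ℝ, BadChain S l' → l'.length ≤ ℓ :=
    fun l' h => le_csSup hLbdd ⟨l', h, rfl⟩
  have h1ℓ : 1 ≤ ℓ := le_csSup hLbdd h1L
  have hℓd : ℓ ≤ d := hlen ▸ hbound l hlBC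
  set g : Fin ℓ → ℝ := fun i => l.get (Fin.cast hlen.symm i) with hgdef
  have hgS : ∀ i, g i ∈ S := fun i => hlBC.2 _ (List.get_mem _ _)
  have hp : l.Pairwise (· < ·) :=
    List.isChain_iff_pairwise.mp (hlBC.1.imp fun a b h => h.1)
  have hgmono : ∀ i j : Fin ℓ, i < j → g i < g j := by
    intro i j hij
    exact List.pairwise_iff_get.mp hp _ _ hij
  have hgap : ∀ (i : ℕ) (h : i + 1 < ℓ), ∃ γ : ℝ, γ ∉ S ∧
      g ⟨i, by omega⟩ < γ ∧ γ < g ⟨i + 1, h⟩ := by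
    intro i h
    have hcons : Rgap S (g ⟨i, by omega⟩) (g ⟨i + 1, h⟩) :=
      List.isChain_iff_getElem.mp hlBC.1 i (by omega)
    obtain ⟨hlt, hnsub⟩ := hcons
    rw [Set.not_subset] at hnsub
    obtain ⟨γ, hγI, hγS⟩ := hnsub
    have e1 : γ ≠ g ⟨i, by omega⟩ := fun hh => hγS (hh ▸ hgS _)
    have e2 : γ ≠ g ⟨i + 1, h⟩ := fun hh => hγS (hh ▸ hgS _)
    exact ⟨γ, hγS, lt_of_le_of_ne hγI.1 (Ne.symm e1), lt_of_le_of_ne hγI.2 e2⟩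
  refine ⟨ℓ, h1ℓ, hℓd, fun i => {y | y ∈ S ∧ Set.uIcc (g i) y ⊆ S}, ?_, ?_, ?_, ?_⟩
  · -- union
    apply Set.Subset.antisymm
    · intro x hx
      by_contra hnc
      rw [Set.mem_iUnion] at hnc
      push_neg at hnc
      have hne' : ∀ y ∈ l, ¬ Set.uIcc x y ⊆ S := by
        intro y hy hsub
        obtain ⟨n, rfl⟩ := List.mem_iff_get.mp hy
        rw [Set.uIcc_comm] at hsub
        exact hnc (Fin.cast hlen n) ⟨hx, hsub⟩
      have := hmax _ (ins_badChain hx hlBC hne')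
      rw [ins_length, hlen] at this
      omega
    · exact Set.iUnion_subset fun i y hy => hy.1
  · -- each interval
    intro i
    refine ⟨⟨g i, hgS i, by
      rw [Set.uIcc_self]; exact Set.singleton_subset_iff.mpr (hgS i)⟩, ?_, ?_⟩
    · exact hbdd.subset (fun y hy => hy.1)
    · constructor
      intro x hx y hy z hz
      have hz' : z ∈ Set.uIcc x y := Set.Icc_subset_uIcc hz
      have hsplit : Set.uIcc x y ⊆ Set.uIcc x (g i) ∪ Set.uIcc (g i) y :=
        Set.uIcc_subset_uIcc_union_uIcc
      rcases hsplit hz' with hz1 | hz2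
      · have hsub : Set.uIcc (g i) z ⊆ S := by
          refine subset_trans (Set.uIcc_subset_uIcc ?_ ?_) (by rw [Set.uIcc_comm]; exact hx.2)
          · exact Set.right_mem_uIcc
          · exact hz1
        exact ⟨hsub Set.right_mem_uIcc, hsub⟩
      · have hsub : Set.uIcc (g i) z ⊆ S := by
          refine subset_trans (Set.uIcc_subset_uIcc ?_ ?_) hy.2
          · exact Set.left_mem_uIcc
          · exact hz2
        exact ⟨hsub Set.right_mem_uIcc, hsub⟩
  · -- strict order between components
    intro i j hij x hx y hy
    have hi1 : i.1 + 1 < ℓ := by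
      have := j.2
      have := hij
      omega
    obtain ⟨γ, hγS, hγl, hγr⟩ := hgap i.1 hi1
    have hgi : g ⟨i.1, by omega⟩ = g i := by congr 1
    rw [hgi] at hγl
    have hxγ : x < γ := by
      by_contra hxe
      push_neg at hxe
      refine hγS (hx.2 ?_)
      rw [Set.mem_uIcc]
      exact Or.inl ⟨hγl.le, hxe⟩
    have hyγ : γ < y := by
      by_contra hye
      push_neg at hye
      have h3 : i.1 < j.1 := hij
      have hγgj : γ < g j := by
        rcases eq_or_lt_of_le (Nat.succ_le_of_lt h3) with heq | hlt'
        · have he : (⟨i.1 + 1, hi1⟩ : Fin ℓ) = j := Fin.ext heq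
          rw [← he]; exact hγr
        · exact lt_trans hγr (hgmono ⟨i.1 + 1, hi1⟩ j hlt')
      refine hγS (hy.2 ?_)
      rw [Set.mem_uIcc]
      exact Or.inr ⟨hye, hγgj.le⟩
    exact lt_trans hxγ hyγ
  · -- separating resolvent points
    intro i j hij
    have hi1 : i.1 + 1 < ℓ := by
      have := j.2
      have := hij
      omega
    obtain ⟨γ, hγS, hγl, hγr⟩ := hgap i.1 hi1
    have hgi : g ⟨i.1, by omega⟩ = g i := by congr 1
    rw [hgi] at hγl
    refine ⟨γ, hγS, ?_, ?_⟩
    · intro x hx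
      by_contra hxe
      push_neg at hxe
      refine hγS (hx.2 ?_)
      rw [Set.mem_uIcc]
      exact Or.inl ⟨hγl.le, hxe.le⟩
    · intro y hy
      by_contra hye
      push_neg at hye
      have h3 : i.1 < j.1 := hij
      have hγgj : γ < g j := by
        rcases eq_or_lt_of_le (Nat.succ_le_of_lt h3) with heq | hlt'
        · have he : (⟨i.1 + 1, hi1⟩ : Fin ℓ) = j := Fin.ext heq
          rw [← he]; exact hγr
        · exact lt_trans hγr (hgmono ⟨i.1 + 1, hi1⟩ j hlt')
      refine hγS (hy.2 ?_)
      rw [Set.mem_uIcc]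
      exact Or.inr ⟨hye.le, hγgj.le⟩

end Decomp

end BohlAux

theorem stmt14 {d : ℕ} (hd : 0 < d) (A Ainv : ℕ → (Euc d →L[ℝ] Euc d))
    (hA : IsLyapunov A Ainv) :
    ∃ ℓ : ℕ, 1 ≤ ℓ ∧ ℓ ≤ d ∧ ∃ I : Fin ℓ → Set ℝ,
      bohlSpectrum A = ⋃ i, I i ∧
      (∀ i, (I i).Nonempty ∧ Bornology.IsBounded (I i) ∧ (I i).OrdConnected) ∧
      (∀ i j : Fin ℓ, i < j → ∀ x ∈ I i, ∀ y ∈ I j, x < y) ∧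
      (∀ i j : Fin ℓ, i < j → ∃ γ, γ ∉ bohlSpectrum A ∧
        (∀ x ∈ I i, x ≤ γ) ∧ (∀ y ∈ I j, γ ≤ y)) := by
  obtain ⟨K, hK1, hKA, hKI⟩ := BohlAux.exists_K hA
  have hinv := BohlAux.hinv_of hA
  have hne : (bohlSpectrum A).Nonempty :=
    BohlAux.bohlSpectrum_nonempty hd hK1 hKA hKI hinv
  have hbdd : Bornology.IsBounded (bohlSpectrum A) :=
    (Metric.isBounded_Icc (-Real.log K) (Real.log K)).subset
      (BohlAux.bohlSpectrum_subset_Icc hK1 hKA hKI hinv)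
  have hbound : ∀ l : List ℝ, BohlAux.BadChain (bohlSpectrum A) l → l.length ≤ d :=
    fun l hl => BohlAux.no_long_badChain hd hK1 hKA hKI hinv hl
  exact BohlAux.decomp hd hne hbdd hbound
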